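/- Let ℓ be differentiable and not attain a local minimum at the origin, and let n ≥ 3. Then the origin (0,0,…,0) is a stationary point of φ(W₁,…,Wₙ) = ℓ(Wₙ⋯W₁) with positive semidefinite (in fact zero) Hessian, yet it is not a local minimizer of φ: for every ε > 0 there exist weight matrices (W₁,…,Wₙ) of norm less than ε·√n with φ(W₁,…,Wₙ) < φ(0,…,0). -/

import Mathlib

open Matrix

/-- Product `W (m-1) * ⋯ * W j` of a chain of matrices with dimensions given by `d`
(the identity when `m = j`, junk when `m < j`). -/
noncomputable def chain (d : ℕ → ℕ) (W : ∀ k : ℕ, Matrix (Fin (d (k + 1))) (Fin (d k)) ℝ)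
    (j : ℕ) : (m : ℕ) → Matrix (Fin (d m)) (Fin (d j)) ℝ
  | 0 => if h : j = 0 then by subst h; exact 1 else 0
  | m + 1 => if h : j = m + 1 then by subst h; exact 1 else W m * chain d W j m

attribute [local instance] Matrix.frobeniusNormedAddCommGroup Matrix.frobeniusNormedSpace

/-! ### Auxiliary lemmas about `chain` -/

lemma chain_self (d : ℕ → ℕ) (W) (j : ℕ) : chain d W j j = 1 := by
  cases j with
  | zero => simp [chain]
  | succ m => simp [chain]

lemma chain_succ (d : ℕ → ℕ) (W) (j m : ℕ) (h : j ≠ m + 1) :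
    chain d W j (m + 1) = W m * chain d W j m := by
  simp [chain, h]

lemma chain_congr (d : ℕ → ℕ) (W W') (j : ℕ) : ∀ m, (∀ k, k < m → W k = W' k) →
    chain d W j m = chain d W' j m
  | 0, _ => rfl
  | m + 1, h => by
    by_cases hj : j = m + 1
    · subst hj; rw [chain_self, chain_self]
    · rw [chain_succ _ _ _ _ hj, chain_succ _ _ _ _ hj, h m (Nat.lt_succ_self m),
        chain_congr d W W' j m (fun k hk => h k (hk.trans (Nat.lt_succ_self m)))]

lemma chain_mul_chain (d : ℕ → ℕ) (W) (i j : ℕ) (hij : i ≤ j) :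
    ∀ m, j ≤ m → chain d W j m * chain d W i j = chain d W i m := by
  intro m
  induction m with
  | zero =>
    intro hm
    interval_cases j
    interval_cases i
    rw [chain_self]; exact Matrix.one_mul _
  | succ m ih =>
    intro hm
    rcases Nat.eq_or_lt_of_le hm with h | h
    · subst h; rw [chain_self]; exact Matrix.one_mul _
    · have hj : j ≤ m := Nat.lt_succ_iff.mp h
      have hj1 : j ≠ m + 1 := by omega
      have hi1 : i ≠ m + 1 := by omega
      rw [chain_succ _ _ _ _ hj1, chain_succ _ _ _ _ hi1, Matrix.mul_assoc, ih hj]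

lemma chain_smul_slot (d : ℕ → ℕ) (W) (p0 : ℕ) (s : ℝ) :
    ∀ m, p0 < m → chain d (fun k => if k = p0 then s • W k else W k) 0 m
      = s • chain d W 0 m := by
  intro m
  induction m with
  | zero => omega
  | succ m ih =>
    intro hp
    have h0 : (0:ℕ) ≠ m + 1 := by omega
    rw [chain_succ _ _ _ _ h0, chain_succ _ _ _ _ h0]
    rcases Nat.lt_succ_iff_lt_or_eq.mp hp with h | h
    · rw [ih h, if_neg (by omega : m ≠ p0), Matrix.mul_smul]
    · rw [if_pos h.symm, chain_congr d _ W 0 m (fun k hk => if_neg (by omega)), Matrix.smul_mul]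

/-! ### Rectangular pseudo-identity matrices -/

/-- Rectangular pseudo-identity supported on indices `< m0`. -/
def Fmat (m0 a b : ℕ) : Matrix (Fin a) (Fin b) ℝ :=
  Matrix.of fun i j => if ((i : ℕ) = (j : ℕ) ∧ (i : ℕ) < m0) then 1 else 0

lemma Fmat_mul (m0 a b c : ℕ) (hb : m0 ≤ b) : Fmat m0 a b * Fmat m0 b c = Fmat m0 a c := by
  ext i j
  simp only [Fmat, Matrix.mul_apply, Matrix.of_apply]
  by_cases h : (i : ℕ) = (j : ℕ) ∧ (i : ℕ) < m0
  · rw [if_pos h]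
    have hib : (i : ℕ) < b := lt_of_lt_of_le h.2 hb
    rw [Finset.sum_eq_single ⟨(i : ℕ), hib⟩]
    · have hj : (j : ℕ) < m0 := h.1 ▸ h.2
      simp [h.1, h.2, hj]
    · intro l _ hl
      rw [if_neg, zero_mul]
      intro hc
      exact hl (by ext; simp [hc.1.symm])
    · simp
  · rw [if_neg h]
    apply Finset.sum_eq_zero
    intro l _
    by_cases h1 : (i : ℕ) = (l : ℕ) ∧ (i : ℕ) < m0
    · have hlj : ¬((l:ℕ) = (j:ℕ) ∧ (l:ℕ) < m0) := fun hc => h ⟨h1.1.trans hc.1, h1.2⟩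
      rw [if_neg hlj, mul_zero]
    · rw [if_neg h1, zero_mul]

lemma Fmat_one (m0 a : ℕ) (ha : a ≤ m0) : Fmat m0 a a = 1 := by
  ext i j
  simp only [Fmat, Matrix.of_apply, Matrix.one_apply]
  by_cases h : i = j
  · rw [if_pos ⟨by rw [h], lt_of_lt_of_le i.isLt ha⟩, if_pos h]
  · rw [if_neg, if_neg h]
    intro hc
    exact h (by ext; exact hc.1)

lemma norm_Fmat_le (m0 a b : ℕ) : ‖Fmat m0 a b‖ ≤ Real.sqrt ((a : ℝ) * b) := by
  rw [Matrix.frobenius_norm_def, Real.sqrt_eq_rpow]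
  apply Real.rpow_le_rpow (by positivity) ?_ (by norm_num)
  simp only [Real.rpow_two]
  calc ∑ i : Fin a, ∑ j : Fin b, ‖Fmat m0 a b i j‖ ^ (2:ℕ)
      ≤ ∑ _i : Fin a, ∑ _j : Fin b, 1 := by
        apply Finset.sum_le_sum; intro i _; apply Finset.sum_le_sum; intro j _
        have : ‖Fmat m0 a b i j‖ ≤ 1 := by
          simp only [Fmat, Matrix.of_apply]
          split <;> simp
        calc ‖Fmat m0 a b i j‖ ^ (2:ℕ) ≤ 1 ^ (2:ℕ) :=
              pow_le_pow_left₀ (norm_nonneg _) this 2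
          _ = 1 := one_pow 2
    _ = (a : ℝ) * b := by simp [mul_comm]

lemma chain_Fpow (d : ℕ → ℕ) (W) (t : ℝ) (m0 j : ℕ) :
    ∀ a : ℕ, 1 ≤ a →
    (∀ k, j ≤ k → k < j + a → W k = t • Fmat m0 (d (k+1)) (d k)) →
    (∀ k, j < k → k < j + a → m0 ≤ d k) →
    chain d W j (j + a) = t ^ a • Fmat m0 (d (j + a)) (d j) := by
  intro a
  induction a with
  | zero => omega
  | succ a ih =>
    intro _ hW hd
    rcases Nat.eq_or_lt_of_le (show 1 ≤ a + 1 from by omega) with h1 | h1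
    · have ha0 : a = 0 := by omega
      subst ha0
      rw [chain_succ _ _ _ _ (by omega), chain_self, Matrix.mul_one,
        hW j le_rfl (by omega), pow_one]
    · have ha : 1 ≤ a := by omega
      have : j + (a + 1) = (j + a) + 1 := by omega
      rw [this, chain_succ _ _ _ _ (by omega),
        ih ha (fun k hk hk' => hW k hk (by omega)) (fun k hk hk' => hd k hk (by omega)),
        hW (j + a) (by omega) (by omega), Matrix.smul_mul, Matrix.mul_smul, smul_smul,
        Fmat_mul m0 _ _ _ (hd (j + a) (by omega) (by omega))]
      rw [show j + a + 1 = j + (a + 1) from by omega]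
      ring_nf

/-! ### Scaling equivalences on product spaces -/

section ScaleEquiv
variable {ι : Type*} [Fintype ι] [DecidableEq ι] {M : ι → Type*}
  [∀ i, NormedAddCommGroup (M i)] [∀ i, NormedSpace ℝ (M i)]

/-- Scale the `p`-th coordinate of a product space by a nonzero scalar `s`. -/
noncomputable def scaleEquiv (p : ι) (s : ℝ) (hs : s ≠ 0) : (∀ i, M i) ≃L[ℝ] (∀ i, M i) where
  toLinearEquiv :=
    { toFun := fun x i => if i = p then s • x i else x i
      invFun := fun x i => if i = p then s⁻¹ • x i else x i
      map_add' := by intro x y; funext i; by_cases h : i = p <;> simp [h, smul_add]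
      map_smul' := by
        intro c x
        funext i
        show (if i = p then s • (c • x) i else (c • x) i)
          = (c • fun i => if i = p then s • x i else x i) i
        by_cases h : i = p
        · subst h
          simp only [if_pos rfl, Pi.smul_apply]
          exact smul_comm s c (x i)
        · simp only [if_neg h, Pi.smul_apply]
      left_inv := by intro x; funext i; by_cases h : i = p <;> simp [h, inv_smul_smul₀ hs]
      right_inv := by intro x; funext i; by_cases h : i = p <;> simp [h, smul_inv_smul₀ hs] }
  continuous_toFun := by
    apply continuous_pi
    intro i
    by_cases h : i = p
    · simp only [if_pos h]
      exact (continuous_apply i).const_smul s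
    · simp only [if_neg h]
      exact continuous_apply i
  continuous_invFun := by
    apply continuous_pi
    intro i
    by_cases h : i = p
    · simp only [if_pos h]
      exact (continuous_apply i).const_smul s⁻¹
    · simp only [if_neg h]
      exact continuous_apply i

lemma scaleEquiv_apply (p : ι) (s : ℝ) (hs : s ≠ 0) (x : ∀ i, M i) (i : ι) :
    scaleEquiv p s hs x i = if i = p then s • x i else x i := rfl

lemma scaleEquiv_single_self (p : ι) (s : ℝ) (hs : s ≠ 0) (v : M p) :
    scaleEquiv p s hs (Pi.single p v) = Pi.single p (s • v) := by
  funext i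
  rw [scaleEquiv_apply]
  by_cases h : i = p
  · subst h; simp
  · simp [h, Pi.single_eq_of_ne h]

lemma scaleEquiv_single_ne (p j : ι) (hjp : j ≠ p) (s : ℝ) (hs : s ≠ 0) (v : M j) :
    scaleEquiv p s hs (Pi.single j v) = Pi.single j v := by
  funext i
  rw [scaleEquiv_apply]
  by_cases h : i = p
  · subst h
    rw [if_pos rfl, Pi.single_eq_of_ne (Ne.symm hjp), smul_zero]
  · rw [if_neg h]

end ScaleEquiv

lemma chain_ext_scale (d : ℕ → ℕ) (n : ℕ) (p : Fin n) (s : ℝ) (hs : s ≠ 0)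
    (x : ∀ k : Fin n, Matrix (Fin (d (k + 1))) (Fin (d k)) ℝ) :
    chain d (fun k => if h : k < n then (scaleEquiv p s hs x) ⟨k, h⟩ else 0) 0 n
      = s • chain d (fun k => if h : k < n then x ⟨k, h⟩ else 0) 0 n := by
  have h1 : (fun k => if h : k < n then (scaleEquiv p s hs x) ⟨k, h⟩ else 0)
      = fun k => if k = (p : ℕ)
          then s • (((fun k' => if h : k' < n then x ⟨k', h⟩ else 0) :
            ∀ k' : ℕ, Matrix (Fin (d (k' + 1))) (Fin (d k')) ℝ) k)
          else (((fun k' => if h : k' < n then x ⟨k', h⟩ else 0) :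
            ∀ k' : ℕ, Matrix (Fin (d (k' + 1))) (Fin (d k')) ℝ) k) := by
    funext k
    by_cases hk : k < n
    · rw [dif_pos hk, scaleEquiv_apply]
      by_cases hkp : (⟨k, hk⟩ : Fin n) = p
      · rw [if_pos hkp, if_pos (show k = (p:ℕ) from by rw [← hkp])]
        simp only [dif_pos hk]
      · rw [if_neg hkp, if_neg (show ¬ k = (p:ℕ) from fun hc => hkp (Fin.ext_iff.mpr hc))]
        simp only [dif_pos hk]
    · rw [dif_neg hk, if_neg (show ¬ k = (p:ℕ) from fun hc => hk (by rw [hc]; exact p.isLt))]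
      show (0 : Matrix (Fin (d (k + 1))) (Fin (d k)) ℝ) = if h : k < n then x ⟨k, h⟩ else 0
      rw [dif_neg hk]
  rw [h1, chain_smul_slot d _ (p : ℕ) s n p.isLt]



lemma third_index {n : ℕ} (hn : 3 ≤ n) (j k : Fin n) : ∃ q : Fin n, q ≠ j ∧ q ≠ k := by
  have hcard : ({j, k} : Finset (Fin n)).card ≤ 2 := by
    have := Finset.card_insert_le j ({k} : Finset (Fin n))
    simpa using this
  have : (({j, k} : Finset (Fin n))ᶜ).Nonempty := by
    rw [← Finset.card_pos, Finset.card_compl, Fintype.card_fin]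
    omega
  obtain ⟨q, hq⟩ := this
  rw [Finset.mem_compl, Finset.mem_insert, Finset.mem_singleton] at hq
  exact ⟨q, fun h => hq (Or.inl h), fun h => hq (Or.inr h)⟩

lemma aux_deriv (d : ℕ → ℕ) (n : ℕ) (hn : 3 ≤ n)
    (ℓ : Matrix (Fin (d n)) (Fin (d 0)) ℝ → ℝ) :
    fderiv ℝ (fun Ws : ∀ k : Fin n, Matrix (Fin (d (k + 1))) (Fin (d k)) ℝ =>
        ℓ (chain d (fun k => if h : k < n then Ws ⟨k, h⟩ else 0) 0 n)) 0 = 0 ∧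
    fderiv ℝ (fderiv ℝ (fun Ws : ∀ k : Fin n, Matrix (Fin (d (k + 1))) (Fin (d k)) ℝ =>
        ℓ (chain d (fun k => if h : k < n then Ws ⟨k, h⟩ else 0) 0 n))) 0 = 0 := by
  haveI : Nonempty (Fin n) := ⟨⟨0, by omega⟩⟩
  set φ : (∀ k : Fin n, Matrix (Fin (d (k + 1))) (Fin (d k)) ℝ) → ℝ :=
    fun Ws => ℓ (chain d (fun k => if h : k < n then Ws ⟨k, h⟩ else 0) 0 n) with hφ
  have h2 : (2:ℝ) ≠ 0 := two_ne_zero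
  have h2i : (2:ℝ)⁻¹ ≠ 0 := by norm_num
  set L : Fin n → Fin n →
      ((∀ k : Fin n, Matrix (Fin (d (k + 1))) (Fin (d k)) ℝ) ≃L[ℝ]
        (∀ k : Fin n, Matrix (Fin (d (k + 1))) (Fin (d k)) ℝ)) :=
    fun p q => (scaleEquiv q (2:ℝ)⁻¹ h2i).trans (scaleEquiv p 2 h2) with hL
  have hφL : ∀ p q : Fin n, φ ∘ ⇑(L p q) = φ := by
    intro p q
    funext x
    show φ (scaleEquiv p 2 h2 (scaleEquiv q 2⁻¹ h2i x)) = φ x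
    rw [hφ]
    simp only
    rw [chain_ext_scale, chain_ext_scale, smul_smul,
      show (2:ℝ) * 2⁻¹ = 1 from by norm_num, one_smul]
  have hLsingle_ne : ∀ (p q j : Fin n), j ≠ p → j ≠ q →
      ∀ v : Matrix (Fin (d (j + 1))) (Fin (d j)) ℝ,
      (L p q) (Pi.single j v) = Pi.single j v := by
    intro p q j hjp hjq v
    show (scaleEquiv p 2 h2) ((scaleEquiv q (2:ℝ)⁻¹ h2i) _) = _
    rw [scaleEquiv_single_ne q j hjq, scaleEquiv_single_ne p j hjp]
  have hLsingle_self : ∀ (p q : Fin n), p ≠ q →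
      ∀ v : Matrix (Fin (d (p + 1))) (Fin (d p)) ℝ,
      (L p q) (Pi.single p v)
        = (2:ℝ) • Pi.single (M := fun k : Fin n => Matrix (Fin (d (k + 1))) (Fin (d k)) ℝ) p v := by
    intro p q hpq v
    show (scaleEquiv p 2 h2) ((scaleEquiv q (2:ℝ)⁻¹ h2i) _) = _
    rw [scaleEquiv_single_ne q p hpq, scaleEquiv_single_self, Pi.single_smul]
  have hA : fderiv ℝ φ 0 = 0 := by
    apply ContinuousLinearMap.ext
    intro u
    rw [ContinuousLinearMap.zero_apply, ← Finset.univ_sum_single u, map_sum]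
    apply Finset.sum_eq_zero
    intro j _
    obtain ⟨q, hqj, -⟩ := third_index hn j j
    have hcomp : fderiv ℝ φ 0 = (fderiv ℝ φ 0).comp ((L j q : _ →L[ℝ] _)) := by
      conv_lhs => rw [← hφL j q]
      rw [show fderiv ℝ (φ ∘ ⇑(L j q)) 0 = (fderiv ℝ φ ((L j q) 0)).comp (L j q : _ →L[ℝ] _) from
        ContinuousLinearEquiv.comp_right_fderiv (L j q)]
      simp only [map_zero]
    have h := congrArg (fun T : _ →L[ℝ] ℝ => T (Pi.single j (u j))) hcomp
    simp only [ContinuousLinearMap.comp_apply, ContinuousLinearEquiv.coe_coe] at h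
    rw [hLsingle_self j q (Ne.symm hqj)] at h
    rw [_root_.map_smul, smul_eq_mul] at h
    linarith
  refine ⟨hA, ?_⟩
  by_cases hdiff : DifferentiableAt ℝ (fderiv ℝ φ) 0
  · have hpt : ∀ (p q : Fin n), ∀ u' w',
        fderiv ℝ (fderiv ℝ φ) 0 u' w'
          = fderiv ℝ (fderiv ℝ φ) 0 ((L p q) u') ((L p q) w') := by
      intro p q u' w'
      letI : NormedAddCommGroup ((∀ k : Fin n, Matrix (Fin (d (k + 1))) (Fin (d k)) ℝ) →L[ℝ] ℝ) :=
        ContinuousLinearMap.toNormedAddCommGroup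
      letI : NormedSpace ℝ ((∀ k : Fin n, Matrix (Fin (d (k + 1))) (Fin (d k)) ℝ) →L[ℝ] ℝ) :=
        ContinuousLinearMap.toNormedSpace
      haveI : ContinuousAdd ((∀ k : Fin n, Matrix (Fin (d (k + 1))) (Fin (d k)) ℝ) →L[ℝ] ℝ) :=
        IsTopologicalAddGroup.toContinuousAdd
      set C : ((∀ k : Fin n, Matrix (Fin (d (k + 1))) (Fin (d k)) ℝ) →L[ℝ] ℝ) →L[ℝ]
          ((∀ k : Fin n, Matrix (Fin (d (k + 1))) (Fin (d k)) ℝ) →L[ℝ] ℝ) :=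
        (ContinuousLinearMap.compL ℝ
          (∀ k : Fin n, Matrix (Fin (d (k + 1))) (Fin (d k)) ℝ)
          (∀ k : Fin n, Matrix (Fin (d (k + 1))) (Fin (d k)) ℝ) ℝ).flip (L p q).toContinuousLinearMap
        with hC
      have hCapp : ∀ T : (∀ k : Fin n, Matrix (Fin (d (k + 1))) (Fin (d k)) ℝ) →L[ℝ] ℝ,
          C T = T.comp (L p q : _ →L[ℝ] _) := fun T => rfl
      have hfun : fderiv ℝ φ = ⇑C ∘ (fderiv ℝ φ ∘ ⇑(L p q)) := by
        funext x
        rw [Function.comp_apply, Function.comp_apply, hCapp]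
        conv_lhs => rw [← hφL p q]
        exact ContinuousLinearEquiv.comp_right_fderiv (L p q)
      have hg : DifferentiableAt ℝ (fderiv ℝ φ ∘ ⇑(L p q)) 0 := by
        have hd0 : DifferentiableAt ℝ (fderiv ℝ φ) ((L p q) 0) := by
          simp only [map_zero]; exact hdiff
        exact hd0.comp 0 (L p q).differentiableAt
      have hB1 : fderiv ℝ (fderiv ℝ φ) 0 = C.comp (fderiv ℝ (fderiv ℝ φ ∘ ⇑(L p q)) 0) := by
        conv_lhs => rw [hfun]
        exact (fderiv_comp (0 : ∀ k : Fin n, Matrix (Fin (d (k + 1))) (Fin (d k)) ℝ)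
          C.differentiableAt hg).trans
          (congrArg (fun T => ContinuousLinearMap.comp T (fderiv ℝ (fderiv ℝ φ ∘ ⇑(L p q)) 0)) C.fderiv)
      have hB2 : fderiv ℝ (fderiv ℝ φ ∘ ⇑(L p q)) 0
          = (fderiv ℝ (fderiv ℝ φ) ((L p q) 0)).comp (L p q : _ →L[ℝ] _) :=
        ContinuousLinearEquiv.comp_right_fderiv (L p q)
      simp only [map_zero] at hB2
      conv_lhs => rw [hB1, hB2]
      rw [ContinuousLinearMap.comp_apply, hCapp]
      simp only [ContinuousLinearMap.comp_apply, ContinuousLinearEquiv.coe_coe]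
    apply ContinuousLinearMap.ext
    intro u
    apply ContinuousLinearMap.ext
    intro w
    simp only [ContinuousLinearMap.zero_apply]
    rw [← Finset.univ_sum_single u, ← Finset.univ_sum_single w, map_sum]
    apply Finset.sum_eq_zero
    intro k _
    rw [map_sum, ContinuousLinearMap.sum_apply]
    apply Finset.sum_eq_zero
    intro j _
    obtain ⟨q, hqj, hqk⟩ := third_index hn j k
    by_cases hjk : j = k
    · subst hjk
      have h := hpt j q (Pi.single j (u j)) (Pi.single j (w j))
      rw [hLsingle_self j q (Ne.symm hqj) (u j), hLsingle_self j q (Ne.symm hqj) (w j)] at h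
      simp only [_root_.map_smul, ContinuousLinearMap.smul_apply, smul_eq_mul] at h
      linarith
    · have h := hpt j q (Pi.single j (u j)) (Pi.single k (w k))
      rw [hLsingle_self j q (Ne.symm hqj) (u j),
        hLsingle_ne j q k (Ne.symm hjk) (Ne.symm hqk) (w k)] at h
      simp only [_root_.map_smul, ContinuousLinearMap.smul_apply, smul_eq_mul] at h
      linarith
  · exact fderiv_zero_of_not_differentiableAt hdiff


lemma aux_exists (d : ℕ → ℕ) (n : ℕ) (hn : 3 ≤ n)
    (hdims : ∀ j, 0 < j → j < n → min (d 0) (d n) ≤ d j)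
    (ℓ : Matrix (Fin (d n)) (Fin (d 0)) ℝ → ℝ)
    (hnotmin : ∀ ε > 0, ∃ W : Matrix (Fin (d n)) (Fin (d 0)) ℝ, ‖W‖ < ε ∧ ℓ W < ℓ 0) :
    ∀ ε > 0, ∃ Ws : ∀ k : Fin n, Matrix (Fin (d (k + 1))) (Fin (d k)) ℝ,
      Real.sqrt (∑ k, ‖Ws k‖ ^ 2) < ε * Real.sqrt n ∧
      ℓ (chain d (fun k => if h : k < n then Ws ⟨k, h⟩ else 0) 0 n) < ℓ 0 := by
  intro ε hε
  haveI : Nonempty (Fin n) := ⟨⟨0, by omega⟩⟩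
  obtain ⟨m0, hm0eq⟩ : ∃ m0, m0 = min (d 0) (d n) := ⟨_, rfl⟩
  have hdims' : ∀ j, 0 < j → j < n → m0 ≤ d j := by
    intro j h1 h2; rw [hm0eq]; exact hdims j h1 h2
  obtain ⟨D, hDpos, hdk⟩ : ∃ D : ℝ, 0 < D ∧ ∀ k, k ≤ n → ((d k : ℝ)) ≤ D := by
    refine ⟨∑ k ∈ Finset.range (n+1), ((d k : ℝ) + 1), ?_, ?_⟩
    · exact Finset.sum_pos (fun i _ => by positivity) ⟨0, Finset.mem_range.mpr (by omega)⟩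
    · intro k hk
      have h0 : ((d k : ℝ) + 1) ≤ ∑ k ∈ Finset.range (n+1), ((d k : ℝ) + 1) :=
        Finset.single_le_sum (f := fun k => ((d k : ℝ) + 1)) (fun i _ => by positivity)
          (Finset.mem_range.mpr (by omega))
      linarith
  have hFle : ∀ a b : ℕ, a ≤ n → b ≤ n → ‖Fmat m0 (d a) (d b)‖ ≤ D := by
    intro a b ha hb
    refine (norm_Fmat_le _ _ _).trans ?_
    have h1 : ((d a : ℝ)) * (d b) ≤ D * D :=
      mul_le_mul (hdk a ha) (hdk b hb) (by positivity) (by linarith)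
    calc Real.sqrt ((d a:ℝ) * (d b)) ≤ Real.sqrt (D*D) := Real.sqrt_le_sqrt h1
      _ = D := Real.sqrt_mul_self (by linarith)
  obtain ⟨t, u, δ, ht, hu, hδ, htu, hslotb, habsb⟩ :
      ∃ t u δ : ℝ, 0 < t ∧ 0 < u ∧ 0 < δ ∧ t ^ (n-1) * u = 1 ∧ t * D < ε ∧ u * (D * δ) < ε := by
    have htpos : 0 < ε / (2 * D) := by positivity
    have htn : 0 < (ε / (2 * D)) ^ (n-1) := by positivity
    refine ⟨ε / (2 * D), ((ε / (2 * D)) ^ (n-1))⁻¹, ε * (ε / (2 * D)) ^ (n-1) / (2 * D),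
      htpos, by positivity, by positivity, mul_inv_cancel₀ (ne_of_gt htn), ?_, ?_⟩
    · have h1 : ε / (2 * D) * D = ε / 2 := by field_simp
      linarith
    · have h2 : ((ε / (2 * D)) ^ (n-1))⁻¹ * (D * (ε * (ε / (2 * D)) ^ (n-1) / (2 * D))) = ε / 2 := by
        field_simp
      linarith
  have hut : u * t ^ (n - 1) = 1 := by rw [mul_comm]; exact htu
  obtain ⟨W, hWnorm, hWl⟩ := hnotmin δ hδ
  have hslotF : ∀ a b : ℕ, a ≤ n → b ≤ n → ‖t • Fmat m0 (d a) (d b)‖ < ε := by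
    intro a b ha hb
    rw [norm_smul, Real.norm_eq_abs, abs_of_pos ht]
    have h1 := mul_le_mul_of_nonneg_left (hFle a b ha hb) ht.le
    linarith
  have hsum : ∀ (Ws : ∀ k : Fin n, Matrix (Fin (d (k + 1))) (Fin (d k)) ℝ),
      (∀ k, ‖Ws k‖ < ε) → Real.sqrt (∑ k, ‖Ws k‖ ^ 2) < ε * Real.sqrt n := by
    intro Ws h
    have hlt : (∑ k, ‖Ws k‖^2) < (n : ℝ) * ε^2 := by
      calc ∑ k, ‖Ws k‖^2 < ∑ _k : Fin n, ε^2 := by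
            apply Finset.sum_lt_sum_of_nonempty Finset.univ_nonempty
            intro k _
            exact pow_lt_pow_left₀ (h k) (norm_nonneg _) (two_ne_zero)
        _ = (n:ℝ) * ε^2 := by
            rw [Finset.sum_const, Finset.card_univ, Fintype.card_fin, nsmul_eq_mul]
    calc Real.sqrt (∑ k, ‖Ws k‖ ^ 2) < Real.sqrt ((n:ℝ) * ε^2) :=
          Real.sqrt_lt_sqrt (by positivity) hlt
      _ = ε * Real.sqrt n := by
          rw [Real.sqrt_mul (by positivity), Real.sqrt_sq hε.le]; ring
  by_cases hcase : d n ≤ d 0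
  · -- `m0 = d n`: absorber at the bottom slot `0`
    have hm0 : m0 = d n := by rw [hm0eq]; exact min_eq_right hcase
    set WN : ∀ k : ℕ, Matrix (Fin (d (k+1))) (Fin (d k)) ℝ :=
      Function.update (fun k => t • Fmat m0 (d (k+1)) (d k)) 0
        (u • (Fmat m0 (d 1) (d n) * W)) with hWN
    have hWN0 : WN 0 = u • (Fmat m0 (d 1) (d n) * W) := by
      rw [hWN]; exact Function.update_self _ _ _
    have hWNk : ∀ k, k ≠ 0 → WN k = t • Fmat m0 (d (k+1)) (d k) := by
      intro k hk; rw [hWN]; exact Function.update_of_ne hk _ _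
    have hchain1 : chain d WN 1 n = t ^ (n-1) • Fmat m0 (d n) (d 1) := by
      have h := chain_Fpow d WN t m0 1 (n-1) (by omega)
        (fun k hk hk' => hWNk k (by omega))
        (fun k hk hk' => hdims' k (by omega) (by omega))
      rw [show 1 + (n-1) = n from by omega] at h
      exact h
    have hchain : chain d WN 0 n = W := by
      rw [← chain_mul_chain d WN 0 1 (by omega) n (by omega), hchain1]
      have h01 : chain d WN 0 1 = WN 0 := by
        rw [chain_succ d WN 0 0 (by omega), chain_self, Matrix.mul_one]
      rw [h01, hWN0, Matrix.smul_mul, Matrix.mul_smul, smul_smul, htu, one_smul,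
        ← Matrix.mul_assoc, Fmat_mul m0 _ _ _ (hdims' 1 (by omega) (by omega)),
        Fmat_one m0 (d n) (le_of_eq hm0.symm), Matrix.one_mul]
    refine ⟨fun k => WN (k : ℕ), hsum _ ?_, ?_⟩
    · intro k
      by_cases hk0 : (k : ℕ) = 0
      · rw [hk0, hWN0, norm_smul, Real.norm_eq_abs, abs_of_pos hu]
        have h1 : ‖Fmat m0 (d 1) (d n) * W‖ ≤ D * ‖W‖ :=
          le_trans (Matrix.frobenius_norm_mul _ _)
            (mul_le_mul_of_nonneg_right (hFle 1 n (by omega) le_rfl) (norm_nonneg _))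
        have h2 : u * ‖Fmat m0 (d 1) (d n) * W‖ ≤ u * (D * ‖W‖) :=
          mul_le_mul_of_nonneg_left h1 hu.le
        have h3 : u * (D * ‖W‖) ≤ u * (D * δ) := by
          apply mul_le_mul_of_nonneg_left _ hu.le
          exact mul_le_mul_of_nonneg_left hWnorm.le hDpos.le
        linarith
      · rw [hWNk _ hk0]
        exact hslotF _ _ (Nat.succ_le_of_lt k.isLt) (le_of_lt k.isLt)
    · rw [chain_congr d _ WN 0 n (fun k hk => by simp only [dif_pos hk]), hchain]
      exact hWl
  · -- `m0 = d 0`: absorber at the top slot `n - 1`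
    have hc : d 0 ≤ d n := le_of_not_ge hcase
    have hm0 : m0 = d 0 := by rw [hm0eq]; exact min_eq_left hc
    obtain ⟨n', rfl⟩ : ∃ n', n = n' + 1 := ⟨n - 1, by omega⟩
    set WN : ∀ k : ℕ, Matrix (Fin (d (k+1))) (Fin (d k)) ℝ :=
      Function.update (fun k => t • Fmat m0 (d (k+1)) (d k)) n'
        (u • (W * Fmat m0 (d 0) (d n'))) with hWN
    have hWNtop : WN n' = u • (W * Fmat m0 (d 0) (d n')) := by
      rw [hWN]; exact Function.update_self _ _ _
    have hWNk : ∀ k, k ≠ n' → WN k = t • Fmat m0 (d (k+1)) (d k) := by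
      intro k hk; rw [hWN]; exact Function.update_of_ne hk _ _
    have hut' : u * t ^ n' = 1 := hut
    have hchain0 : chain d WN 0 n' = t ^ n' • Fmat m0 (d n') (d 0) := by
      have h := chain_Fpow d WN t m0 0 n' (by omega)
        (fun k hk hk' => hWNk k (by omega))
        (fun k hk hk' => hdims' k (by omega) (by omega))
      rw [Nat.zero_add] at h
      exact h
    have hchain : chain d WN 0 (n'+1) = W := by
      rw [chain_succ d WN 0 n' (by omega), hWNtop, hchain0,
        Matrix.smul_mul, Matrix.mul_smul, smul_smul, hut', one_smul,
        Matrix.mul_assoc, Fmat_mul m0 _ _ _ (hdims' n' (by omega) (by omega)),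
        Fmat_one m0 (d 0) (le_of_eq hm0.symm), Matrix.mul_one]
    refine ⟨fun k => WN (k : ℕ), hsum _ ?_, ?_⟩
    · intro k
      by_cases hk0 : (k : ℕ) = n'
      · rw [hk0, hWNtop, norm_smul, Real.norm_eq_abs, abs_of_pos hu]
        have h1 : ‖W * Fmat m0 (d 0) (d n')‖ ≤ D * ‖W‖ := by
          refine le_trans (Matrix.frobenius_norm_mul _ _) ?_
          have := mul_le_mul_of_nonneg_right (hFle 0 n' (by omega) (by omega)) (norm_nonneg W)
          nlinarith [norm_nonneg W]
        have h2 : u * ‖W * Fmat m0 (d 0) (d n')‖ ≤ u * (D * ‖W‖) :=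
          mul_le_mul_of_nonneg_left h1 hu.le
        have h3 : u * (D * ‖W‖) ≤ u * (D * δ) := by
          apply mul_le_mul_of_nonneg_left _ hu.le
          exact mul_le_mul_of_nonneg_left hWnorm.le hDpos.le
        linarith
      · rw [hWNk _ hk0]
        exact hslotF _ _ (Nat.succ_le_of_lt k.isLt) (le_of_lt k.isLt)
    · rw [chain_congr d _ WN 0 (n'+1) (fun k hk => by simp only [dif_pos hk]), hchain]
      exact hWl

/-- For `n ≥ 3` layers and a differentiable loss `ℓ` that does not attain a local minimum at the
origin, the origin is a stationary point of `φ(W₁,…,Wₙ) = ℓ(Wₙ⋯W₁)` with zero (in particular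
positive semidefinite) Hessian, yet it is not a local minimizer: for every `ε > 0` there are
weights of (Frobenius tuple) norm less than `ε·√n` with `φ(W₁,…,Wₙ) < φ(0,…,0)`. -/
theorem origin_nonstrict_saddle (d : ℕ → ℕ) (n : ℕ) (hn : 3 ≤ n)
    (hdims : ∀ j, 0 < j → j < n → min (d 0) (d n) ≤ d j)
    (ℓ : Matrix (Fin (d n)) (Fin (d 0)) ℝ → ℝ) (hℓ : Differentiable ℝ ℓ)
    (hnotmin : ∀ ε > 0, ∃ W : Matrix (Fin (d n)) (Fin (d 0)) ℝ, ‖W‖ < ε ∧ ℓ W < ℓ 0) :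
    fderiv ℝ (fun Ws : ∀ k : Fin n, Matrix (Fin (d (k + 1))) (Fin (d k)) ℝ =>
        ℓ (chain d (fun k => if h : k < n then Ws ⟨k, h⟩ else 0) 0 n)) 0 = 0 ∧
    fderiv ℝ (fderiv ℝ (fun Ws : ∀ k : Fin n, Matrix (Fin (d (k + 1))) (Fin (d k)) ℝ =>
        ℓ (chain d (fun k => if h : k < n then Ws ⟨k, h⟩ else 0) 0 n))) 0 = 0 ∧
    ∀ ε > 0, ∃ Ws : ∀ k : Fin n, Matrix (Fin (d (k + 1))) (Fin (d k)) ℝ,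
      Real.sqrt (∑ k, ‖Ws k‖ ^ 2) < ε * Real.sqrt n ∧
      ℓ (chain d (fun k => if h : k < n then Ws ⟨k, h⟩ else 0) 0 n) < ℓ 0 := by
  obtain ⟨h1, h2⟩ := aux_deriv d n hn ℓ
  exact ⟨h1, h2, aux_exists d n hn hdims ℓ hnotmin⟩
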